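/- The 6×6 matrix M = (1/6)·[[1/3,1/4,1/12,0,1/12,1/4],[1/4,1/3,1/4,1/12,0,1/12],[1/12,1/4,1/3,1/4,1/12,0],[0,1/12,1/4,1/3,1/4,1/12],[1/12,0,1/12,1/4,1/3,1/4],[1/4,1/12,0,1/12,1/4,1/3]] is doubly nonnegative (positive semidefinite with nonnegative entries) and every row sum and column sum of M equals 1/6, but M is not completely positive: there is no entrywise nonnegative matrix B with M = B Bᵀ. -/

import Mathlib

open Matrix

section AuxLemmas

private lemma vec6_five' {α : Type*} {m : ℕ} (x : α) (u : Fin (m + 5) → α) :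
    Matrix.vecCons x u 5 =
      Matrix.vecHead (Matrix.vecTail (Matrix.vecTail (Matrix.vecTail (Matrix.vecTail u)))) := rfl

private lemma tri1' (a b c : ℝ) :
    0 ≤ a^2 + b^2 + c^2 - (3/2) * (a*b + b*c) + (1/4) * (a*c) := by
  nlinarith [sq_nonneg (3*(a+c) - 4*b), sq_nonneg (a-c)]

private lemma tri2' (a b c : ℝ) (ha : 0 ≤ a) (hb : 0 ≤ b) (hc : 0 ≤ c) :
    0 ≤ a^2 + b^2 + c^2 + (1/4) * (a*b + b*c + c*a) := by
  nlinarith [mul_nonneg ha hb, mul_nonneg hb hc, mul_nonneg hc ha,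
    sq_nonneg a, sq_nonneg b, sq_nonneg c]

private lemma key_quad' (x0 x1 x2 x3 x4 x5 : ℝ) (h0 : 0 ≤ x0) (h1 : 0 ≤ x1) (h2 : 0 ≤ x2)
    (h3 : 0 ≤ x3) (h4 : 0 ≤ x4) (h5 : 0 ≤ x5)
    (p03 : x0 * x3 = 0) (p14 : x1 * x4 = 0) (p25 : x2 * x5 = 0) :
    0 ≤ x0^2 + x1^2 + x2^2 + x3^2 + x4^2 + x5^2
      - (3/2) * (x0*x1 + x1*x2 + x2*x3 + x3*x4 + x4*x5 + x5*x0)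
      + (1/4) * (x0*x2 + x1*x3 + x2*x4 + x3*x5 + x4*x0 + x5*x1) := by
  rcases mul_eq_zero.mp p03 with h|h <;> rcases mul_eq_zero.mp p14 with h'|h' <;>
    rcases mul_eq_zero.mp p25 with h''|h'' <;> subst h h' h''
  · nlinarith [tri1' x3 x4 x5]
  · nlinarith [tri1' x2 x3 x4]
  · nlinarith [tri2' x1 x3 x5 h1 h3 h5]
  · nlinarith [tri1' x1 x2 x3]
  · nlinarith [tri1' x4 x5 x0]
  · nlinarith [tri2' x0 x2 x4 h0 h2 h4]
  · nlinarith [tri1' x5 x0 x1]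
  · nlinarith [tri1' x0 x1 x2]

end AuxLemmas

/-- The `6 × 6` circulant matrix of the paper's example of a doubly nonnegative
matrix in `𝒟𝒩𝒩₆ \ 𝒞𝒫₆`. -/
noncomputable def Mex : Matrix (Fin 6) (Fin 6) ℝ :=
  (1 / 6 : ℝ) •
    !![1/3, 1/4, 1/12, 0, 1/12, 1/4;
       1/4, 1/3, 1/4, 1/12, 0, 1/12;
       1/12, 1/4, 1/3, 1/4, 1/12, 0;
       0, 1/12, 1/4, 1/3, 1/4, 1/12;
       1/12, 0, 1/12, 1/4, 1/3, 1/4;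
       1/4, 1/12, 0, 1/12, 1/4, 1/3]

set_option maxHeartbeats 2000000 in
/-- The matrix `Mex` is doubly nonnegative (positive semidefinite with nonnegative
entries), has all row and column sums equal to `1/6`, but is not completely
positive: there is no entrywise nonnegative `B` with `Mex = B Bᵀ`. -/
theorem Mex_doublyNonnegative_not_completelyPositive :
    Mex.PosSemidef ∧
    (∀ i j, 0 ≤ Mex i j) ∧
    (∀ i, ∑ j, Mex i j = 1 / 6) ∧
    (∀ j, ∑ i, Mex i j = 1 / 6) ∧
    ¬ ∃ (k : ℕ) (B : Matrix (Fin 6) (Fin k) ℝ),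
        (∀ i j, 0 ≤ B i j) ∧ Mex = B * Bᵀ := by
  refine ⟨posSemidef_iff_dotProduct_mulVec.mpr ⟨?_, ?_⟩, ?_, ?_, ?_, ?_⟩
  · -- Hermitian
    ext i j
    fin_cases i <;> fin_cases j <;>
      norm_num [Mex, vec6_five', Matrix.conjTranspose_apply]
  · -- quadratic form nonneg
    intro x
    simp only [dotProduct, Matrix.mulVec, Fin.sum_univ_six, Mex, Matrix.smul_apply,
      Matrix.of_apply, Matrix.cons_val_zero, Matrix.cons_val_one, Matrix.head_cons,
      Matrix.cons_val_two, Matrix.tail_cons, Matrix.cons_val_three, Matrix.cons_val_four,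
      vec6_five', star_trivial, smul_eq_mul]
    nlinarith [sq_nonneg (x 0 + x 1 + x 2 + x 3 + x 4 + x 5),
      sq_nonneg (2*x 0 + x 1 - x 2 - 2*x 3 - x 4 + x 5),
      sq_nonneg (x 1 + x 2 - x 4 - x 5)]
  · -- entries nonneg
    intro i j
    fin_cases i <;> fin_cases j <;> norm_num [Mex, vec6_five']
  · -- row sums
    intro i
    fin_cases i <;> norm_num [Mex, Fin.sum_univ_six, vec6_five', Matrix.cons_val_two, Matrix.cons_val_three, Matrix.cons_val_four]
  · -- column sums
    intro j
    fin_cases j <;> norm_num [Mex, Fin.sum_univ_six, vec6_five', Matrix.cons_val_two, Matrix.cons_val_three, Matrix.cons_val_four]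
  · -- not completely positive
    rintro ⟨k, B, hB, hM⟩
    have hentry : ∀ i j : Fin 6, Mex i j = ∑ c, B i c * B j c := by
      intro i j
      rw [hM]
      simp [Matrix.mul_apply, Matrix.transpose_apply]
    -- the three zero entries force pointwise orthogonality
    have hzero : ∀ (i j : Fin 6), Mex i j = 0 → ∀ c, B i c * B j c = 0 := by
      intro i j hij c
      have hs : (∑ c, B i c * B j c) = 0 := by rw [← hentry, hij]
      exact (Finset.sum_eq_zero_iff_of_nonneg
        (fun c _ => mul_nonneg (hB i c) (hB j c))).mp hs c (Finset.mem_univ c)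
    have h03 : ∀ c, B 0 c * B 3 c = 0 := hzero 0 3 (by norm_num [Mex, Matrix.cons_val_three])
    have h14 : ∀ c, B 1 c * B 4 c = 0 := hzero 1 4 (by norm_num [Mex, vec6_five', Matrix.cons_val_two, Matrix.cons_val_four])
    have h25 : ∀ c, B 2 c * B 5 c = 0 := hzero 2 5 (by norm_num [Mex, vec6_five', Matrix.cons_val_two, Matrix.cons_val_four])
    -- each column contributes a nonnegative amount to the separating functional
    have hcol : ∀ c, 0 ≤ (B 0 c)^2 + (B 1 c)^2 + (B 2 c)^2 + (B 3 c)^2 + (B 4 c)^2 + (B 5 c)^2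
        - (3/2) * (B 0 c * B 1 c + B 1 c * B 2 c + B 2 c * B 3 c + B 3 c * B 4 c
            + B 4 c * B 5 c + B 5 c * B 0 c)
        + (1/4) * (B 0 c * B 2 c + B 1 c * B 3 c + B 2 c * B 4 c + B 3 c * B 5 c
            + B 4 c * B 0 c + B 5 c * B 1 c) := fun c =>
      key_quad' _ _ _ _ _ _ (hB 0 c) (hB 1 c) (hB 2 c) (hB 3 c) (hB 4 c) (hB 5 c)
        (h03 c) (h14 c) (h25 c)
    have htot : 0 ≤ ∑ c, ((B 0 c)^2 + (B 1 c)^2 + (B 2 c)^2 + (B 3 c)^2 + (B 4 c)^2 + (B 5 c)^2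
        - (3/2) * (B 0 c * B 1 c + B 1 c * B 2 c + B 2 c * B 3 c + B 3 c * B 4 c
            + B 4 c * B 5 c + B 5 c * B 0 c)
        + (1/4) * (B 0 c * B 2 c + B 1 c * B 3 c + B 2 c * B 4 c + B 3 c * B 5 c
            + B 4 c * B 0 c + B 5 c * B 1 c)) :=
      Finset.sum_nonneg fun c _ => hcol c
    -- but the total equals a fixed negative combination of entries of Mex
    have hexp : (Mex 0 0 + Mex 1 1 + Mex 2 2 + Mex 3 3 + Mex 4 4 + Mex 5 5)
        - (3/2) * (Mex 0 1 + Mex 1 2 + Mex 2 3 + Mex 3 4 + Mex 4 5 + Mex 5 0)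
        + (1/4) * (Mex 0 2 + Mex 1 3 + Mex 2 4 + Mex 3 5 + Mex 4 0 + Mex 5 1)
        = ∑ c, ((B 0 c)^2 + (B 1 c)^2 + (B 2 c)^2 + (B 3 c)^2 + (B 4 c)^2 + (B 5 c)^2
        - (3/2) * (B 0 c * B 1 c + B 1 c * B 2 c + B 2 c * B 3 c + B 3 c * B 4 c
            + B 4 c * B 5 c + B 5 c * B 0 c)
        + (1/4) * (B 0 c * B 2 c + B 1 c * B 3 c + B 2 c * B 4 c + B 3 c * B 5 c
            + B 4 c * B 0 c + B 5 c * B 1 c)) := by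
      simp only [hentry, Finset.mul_sum, ← Finset.sum_add_distrib, ← Finset.sum_sub_distrib]
      exact Finset.sum_congr rfl fun c _ => by ring
    have hneg : (Mex 0 0 + Mex 1 1 + Mex 2 2 + Mex 3 3 + Mex 4 4 + Mex 5 5)
        - (3/2) * (Mex 0 1 + Mex 1 2 + Mex 2 3 + Mex 3 4 + Mex 4 5 + Mex 5 0)
        + (1/4) * (Mex 0 2 + Mex 1 3 + Mex 2 4 + Mex 3 5 + Mex 4 0 + Mex 5 1)
        = -(1/48) := by
      norm_num [Mex, vec6_five', Matrix.cons_val_two, Matrix.cons_val_three, Matrix.cons_val_four]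
    rw [← hexp, hneg] at htot
    norm_num at htot
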